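/- Let p be an odd prime, t ≥ 1, r = p^t and k = (r−1)/2. Then in F_p[T] the quotient in the Euclidean division of T^r by (T²−1)^{(r−1)/2} equals T; consequently the sequence of polynomials defined by A_1 = T and A_{i+1} = ⌊A_i^r / (T²−1)^k⌋ (polynomial part) is constant, A_i = T for all i ≥ 1. -/

import Mathlib

open Polynomial

noncomputable section

/-- `A_1 = T`, `A_{i+1} = ⌊A_i^r / P_k⌋` where `P_k = (T²-1)^k` (Euclidean quotient). -/
def Aseq (K : Type*) [Field K] (r k : ℕ) : ℕ → Polynomial K
  | 0 => X
  | 1 => X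
  | i + 2 => Aseq K r k (i + 1) ^ r / (X ^ 2 - 1) ^ k

lemma key_div (K : Type*) [Field K] (k : ℕ) :
    (X : Polynomial K) ^ (2 * k + 1) / (X ^ 2 - 1) ^ k = X := by
  have hmon : ((X : Polynomial K) ^ 2 - 1).Monic := by
    simpa using monic_X_pow_sub_C (1 : K) (n := 2) (by norm_num)
  have hb : ((X : Polynomial K) ^ 2 - 1) ^ k |>.Monic := hmon.pow k
  set R : Polynomial K := X * ∑ j ∈ Finset.range k, ((X:Polynomial K)^2 - 1) ^ j * (k.choose j : Polynomial K) with hR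
  have hdeg2 : ((X : Polynomial K) ^ 2 - 1).degree = 2 := by
    have h := degree_X_pow_sub_C (R := K) (n := 2) (by norm_num) (1 : K)
    rw [C_1] at h
    exact_mod_cast h
  have hdegb : (((X : Polynomial K) ^ 2 - 1) ^ k).degree = ((2 * k : ℕ) : WithBot ℕ) := by
    rw [degree_pow, hdeg2]
    push_cast
    rw [nsmul_eq_mul]
    push_cast
    ring
  have hsum : (X : Polynomial K) ^ (2 * k + 1) = R + ((X:Polynomial K)^2 - 1) ^ k * X := by
    have expand : ((X : Polynomial K) ^ 2) ^ k
        = ∑ j ∈ Finset.range (k + 1), ((X:Polynomial K)^2 - 1) ^ j * (k.choose j : Polynomial K) := by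
      have := add_pow ((X:Polynomial K)^2 - 1) 1 k
      simpa [one_pow, mul_one] using this
    have : (X : Polynomial K) ^ (2 * k + 1) = X * ((X:Polynomial K)^2)^k := by
      rw [← pow_mul]; ring
    rw [this, expand, Finset.sum_range_succ, Nat.choose_self]
    push_cast
    ring
  have hdegR : R.degree < (((X : Polynomial K) ^ 2 - 1) ^ k).degree := by
    rw [hdegb, hR]
    rcases Nat.eq_zero_or_pos k with hk | hk
    · subst hk; simp
    calc (X * ∑ j ∈ Finset.range k, ((X:Polynomial K)^2 - 1) ^ j * (k.choose j : Polynomial K)).degree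
        ≤ 1 + (∑ j ∈ Finset.range k, ((X:Polynomial K)^2 - 1) ^ j * (k.choose j : Polynomial K)).degree := by
          simpa using degree_mul_le (X : Polynomial K) _
      _ ≤ 1 + (2 * (k - 1) : ℕ) := by
          gcongr
          refine (degree_sum_le _ _).trans ?_
          refine Finset.sup_le fun j hj => ?_
          refine (degree_mul_le _ _).trans ?_
          have h1 : (((X:Polynomial K)^2 - 1) ^ j).degree ≤ ((2 * j : ℕ) : WithBot ℕ) := by
            rw [degree_pow, hdeg2]
            rw [nsmul_eq_mul]
            push_cast
            exact le_of_eq (by ring)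
          have h2 : ((k.choose j : Polynomial K)).degree ≤ 0 := by
            simpa using degree_natCast_le (R := K) (k.choose j)
          calc (((X:Polynomial K)^2 - 1) ^ j).degree + ((k.choose j : Polynomial K)).degree
              ≤ (2 * j : ℕ) + 0 := add_le_add h1 h2
            _ ≤ (2 * (k - 1) : ℕ) := by
                rw [add_zero]
                have hj' : 2 * j ≤ 2 * (k - 1) := by
                  have := Finset.mem_range.mp hj
                  omega
                exact_mod_cast (Nat.cast_le (α := WithBot ℕ)).mpr hj'
      _ < (2 * k : ℕ) := by
          rw [← Nat.cast_one, ← Nat.cast_add]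
          have h' : 1 + 2 * (k - 1) < 2 * k := by omega
          exact_mod_cast (Nat.cast_lt (α := WithBot ℕ)).mpr h'
  have := (div_modByMonic_unique (f := (X : Polynomial K) ^ (2 * k + 1)) X R hb
    ⟨by rw [hsum], hdegR⟩).1
  rw [← divByMonic_eq_div _ hb, this]

/-- Let `p` be an odd prime, `r = p^t`, `k = (r-1)/2`. The Euclidean quotient of `T^r` by
`(T²-1)^((r-1)/2)` in `F_p[T]` is `T`; consequently the sequence `A_1 = T`,
`A_{i+1} = ⌊A_i^r/(T²-1)^k⌋` is constant equal to `T`. -/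
theorem statement6 (p t : ℕ) [Fact p.Prime] (hodd : p ≠ 2) (ht : 1 ≤ t) :
    (X : Polynomial (ZMod p)) ^ (p ^ t) / (X ^ 2 - 1) ^ ((p ^ t - 1) / 2) = X ∧
    ∀ i, 1 ≤ i → Aseq (ZMod p) (p ^ t) ((p ^ t - 1) / 2) i = X := by
  have hp := (Fact.out : p.Prime)
  have hpodd : Odd (p ^ t) := (hp.odd_of_ne_two hodd).pow
  have hr : 2 * ((p ^ t - 1) / 2) + 1 = p ^ t := by
    obtain ⟨m, hm⟩ := hpodd
    omega
  have hdiv : (X : Polynomial (ZMod p)) ^ (p ^ t) / (X ^ 2 - 1) ^ ((p ^ t - 1) / 2) = X := by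
    have := key_div (ZMod p) ((p ^ t - 1) / 2)
    rwa [hr] at this
  refine ⟨hdiv, ?_⟩
  intro i hi
  induction i with
  | zero => omega
  | succ n ih =>
    match n, ih with
    | 0, _ => rfl
    | Nat.succ m, ih =>
      rw [Aseq, ih (by omega)]
      exact hdiv
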